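/- Let r ∈ (0,1), let F_r : (0,r) → [0,∞) be integrable, and let u : ℝ → ℝ be the indicator function of the interval (−1,1). Then ∫_{−1}^{1} |(A_r u)(x)| dx = (1/r²) ∫_0^r ρ F_r(ρ) dρ. In particular, if F_r satisfies the normalization ∫_0^r ρ F_r(ρ) dρ = r², then ∫_{−1}^{1} |(A_r u)(x)| dx = 1 for every r ∈ (0,1). -/

import Mathlib

open MeasureTheory Set

lemma intervalIntegrable_of_eqOn_Ioo {a b : ℝ} (hab : a ≤ b) {f h : ℝ → ℝ}
    (hh : IntegrableOn h (Ioo a b)) (heq : ∀ x ∈ Ioo a b, f x = h x) :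
    IntervalIntegrable f volume a b := by
  rw [intervalIntegrable_iff_integrableOn_Ioc_of_le hab,
    integrableOn_Ioc_iff_integrableOn_Ioo]
  exact hh.congr ((ae_restrict_iff' measurableSet_Ioo).2
    (Filter.Eventually.of_forall fun y hy => (heq y hy).symm))

lemma intervalIntegral_congr_Ioo {a b : ℝ} (hab : a ≤ b) {f h : ℝ → ℝ}
    (heq : ∀ x ∈ Ioo a b, f x = h x) :
    (∫ x in a..b, f x) = ∫ x in a..b, h x := by
  rw [intervalIntegral.integral_of_le hab, intervalIntegral.integral_of_le hab,
    integral_Ioc_eq_integral_Ioo, integral_Ioc_eq_integral_Ioo]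
  exact setIntegral_congr_fun measurableSet_Ioo heq

lemma fubini_triangle {r : ℝ} {F : ℝ → ℝ}
    (hF : IntegrableOn F (Ioo 0 r)) :
    (∫ s in Ioo (0:ℝ) r, (∫ ξ in Ioo s r, F ξ)) = ∫ ξ in Ioo (0:ℝ) r, ξ * F ξ := by
  obtain ⟨g, hgsm, hfg⟩ := hF.1
  have hg : IntegrableOn g (Ioo 0 r) := hF.congr_fun_ae hfg
  set μ := volume.restrict (Ioo (0:ℝ) r) with hμ
  have hfin : IsFiniteMeasure μ := ⟨by rw [hμ, Measure.restrict_apply_univ]; exact measure_Ioo_lt_top⟩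
  have hFg_sub : ∀ s ∈ Ioo (0:ℝ) r, (∫ ξ in Ioo s r, F ξ) = ∫ ξ in Ioo s r, g ξ := by
    intro s hs
    exact integral_congr_ae (hfg.filter_mono (ae_mono (Measure.restrict_mono
      (Ioo_subset_Ioo_left hs.1.le) le_rfl)))
  have hRHS : (∫ ξ in Ioo (0:ℝ) r, ξ * F ξ) = ∫ ξ in Ioo (0:ℝ) r, ξ * g ξ :=
    integral_congr_ae (hfg.mono fun ξ h => by simp only [h])
  rw [hRHS]
  rw [show (∫ s in Ioo (0:ℝ) r, (∫ ξ in Ioo s r, F ξ)) = ∫ s in Ioo (0:ℝ) r, (∫ ξ in Ioo s r, g ξ) from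
    setIntegral_congr_ae measurableSet_Ioo (ae_of_all _ fun s hs => hFg_sub s hs)]
  set U : Set (ℝ × ℝ) := {p : ℝ × ℝ | p.1 < p.2} with hU
  have hUm : MeasurableSet U := measurableSet_lt measurable_fst measurable_snd
  set φ : ℝ × ℝ → ℝ := U.indicator (fun p => g p.2) with hφ
  have hφi : Integrable φ (μ.prod μ) := by
    have h1 : Integrable (fun p : ℝ × ℝ => (fun _ : ℝ => (1:ℝ)) p.1 * g p.2) (μ.prod μ) :=
      (integrable_const 1).mul_prod hg
    simp only [one_mul] at h1
    exact h1.indicator hUm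
  have hswap := integral_integral_swap (f := fun s ξ => φ (s, ξ)) (μ := μ) (ν := μ)
    (by exact hφi)
  have hL : (∫ s in Ioo (0:ℝ) r, (∫ ξ in Ioo s r, g ξ)) = ∫ s, (∫ ξ, φ (s, ξ) ∂μ) ∂μ := by
    refine setIntegral_congr_ae measurableSet_Ioo (ae_of_all _ fun s hs => ?_)
    have : (∫ ξ, φ (s, ξ) ∂μ) = ∫ ξ in Ioi s, g ξ ∂μ := by
      rw [← integral_indicator measurableSet_Ioi]
      refine integral_congr_ae (ae_of_all _ fun ξ => ?_)
      simp only [hφ, hU, Set.indicator_apply, Set.mem_setOf_eq, Set.mem_Ioi]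
    rw [this, hμ, Measure.restrict_restrict measurableSet_Ioi,
      show Ioi s ∩ Ioo 0 r = Ioo s r by
        ext ξ; simp only [Set.mem_inter_iff, Set.mem_Ioi, Set.mem_Ioo]
        exact ⟨fun ⟨h1, _, h3⟩ => ⟨h1, h3⟩, fun ⟨h1, h2⟩ => ⟨h1, hs.1.trans h1, h2⟩⟩]
  have hR : (∫ ξ, (∫ s, φ (s, ξ) ∂μ) ∂μ) = ∫ ξ in Ioo (0:ℝ) r, ξ * g ξ := by
    refine setIntegral_congr_ae measurableSet_Ioo (ae_of_all _ fun ξ hξ => ?_)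
    have : (∫ s, φ (s, ξ) ∂μ) = ∫ s in Iio ξ, (fun _ => g ξ) s ∂μ := by
      rw [← integral_indicator measurableSet_Iio]
      refine integral_congr_ae (ae_of_all _ fun s => ?_)
      simp only [hφ, hU, Set.indicator_apply, Set.mem_setOf_eq, Set.mem_Iio]
    rw [this, hμ, Measure.restrict_restrict measurableSet_Iio,
      show Iio ξ ∩ Ioo 0 r = Ioo 0 ξ by
        ext s; simp only [Set.mem_inter_iff, Set.mem_Iio, Set.mem_Ioo]
        exact ⟨fun ⟨h1, h2, _⟩ => ⟨h2, h1⟩, fun ⟨h1, h2⟩ => ⟨h2, h1, h2.trans hξ.2⟩⟩,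
      setIntegral_const]
    simp [Real.volume_Ioo, ENNReal.toReal_ofReal hξ.1.le, hξ.1.le]
  rw [hL, hswap, hR]

/-- The one-dimensional adhesion operator
`(A_r u)(x) = (1/(2r²)) ∫_{−r}^{r} u(x+ξ) sign(ξ) F_r(|ξ|) dξ`. -/
noncomputable def adhesion1D (r : ℝ) (Fr : ℝ → ℝ) (u : ℝ → ℝ) (x : ℝ) : ℝ :=
  (2 * r ^ 2)⁻¹ * ∫ ξ in (-r)..r, u (x + ξ) * Real.sign ξ * Fr |ξ|

theorem integral_abs_adhesion1D_indicator
    (r : ℝ) (hr : r ∈ Set.Ioo (0 : ℝ) 1)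
    (Fr : ℝ → ℝ) (hFnonneg : ∀ ρ ∈ Set.Ioo (0 : ℝ) r, 0 ≤ Fr ρ)
    (hF : IntegrableOn Fr (Set.Ioo 0 r))
    (u : ℝ → ℝ) (hu : u = Set.indicator (Set.Ioo (-1 : ℝ) 1) fun _ => (1 : ℝ)) :
    (∫ x in (-1 : ℝ)..1, |adhesion1D r Fr u x|) =
        (r ^ 2)⁻¹ * ∫ ρ in (0 : ℝ)..r, ρ * Fr ρ ∧
      ((∫ ρ in (0 : ℝ)..r, ρ * Fr ρ) = r ^ 2 →
        (∫ x in (-1 : ℝ)..1, |adhesion1D r Fr u x|) = 1) := by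
  obtain ⟨hr0, hr1⟩ := hr
  have hr2 : (r:ℝ) ^ 2 ≠ 0 := by positivity
  suffices key : (∫ x in (-1 : ℝ)..1, |adhesion1D r Fr u x|) =
      (r ^ 2)⁻¹ * ∫ ρ in (0 : ℝ)..r, ρ * Fr ρ by
    refine ⟨key, fun hnorm => ?_⟩
    rw [key, hnorm, inv_mul_cancel₀ hr2]
  set H : ℝ → ℝ := fun s => ∫ ξ in Ioo s r, Fr ξ with hH
  have hHzero : ∀ s, r ≤ s → H s = 0 := by
    intro s hs
    simp [hH, Set.Ioo_eq_empty (not_lt.2 hs)]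
  have hHnn : ∀ s, 0 ≤ s → 0 ≤ H s := by
    intro s hs
    exact setIntegral_nonneg measurableSet_Ioo fun ξ hξ => hFnonneg ξ ⟨hs.trans_lt hξ.1, hξ.2⟩
  have hHanti : AntitoneOn H (Ici 0) := by
    intro s hs t ht hst
    refine setIntegral_mono_set (hF.mono_set (Ioo_subset_Ioo_left hs)) ?_ ?_
    · exact (ae_restrict_iff' measurableSet_Ioo).2
        (Filter.Eventually.of_forall fun ξ hξ => hFnonneg ξ ⟨hs.trans_lt hξ.1, hξ.2⟩)
    · exact HasSubset.Subset.eventuallyLE (Ioo_subset_Ioo_left hst)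
  have utail : ∀ t : ℝ, 0 < t →
      (∫ ξ in Ioo (0:ℝ) r, (Iio t).indicator Fr ξ) = (∫ ξ in Ioo (0:ℝ) r, Fr ξ) - H t := by
    intro t ht
    have hsplit := integral_inter_add_diff (μ := volume) (f := Fr) (s := Ioo 0 r)
      (t := Iio t) measurableSet_Iio hF
    have hdiff : Ioo 0 r \ Iio t = Ico t r := by
      ext ξ
      simp only [Set.mem_diff, Set.mem_Ioo, Set.mem_Iio, not_lt, Set.mem_Ico]
      constructor
      · rintro ⟨⟨_, h2⟩, h3⟩; exact ⟨h3, h2⟩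
      · rintro ⟨h1, h2⟩; exact ⟨⟨ht.trans_le h1, h2⟩, h1⟩
    have hind : (∫ ξ in Ioo (0:ℝ) r, (Iio t).indicator Fr ξ) = ∫ ξ in Ioo 0 r ∩ Iio t, Fr ξ :=
      setIntegral_indicator measurableSet_Iio
    have hIco : (∫ ξ in Ioo 0 r \ Iio t, Fr ξ) = H t := by
      rw [hdiff, integral_Ico_eq_integral_Ioo]
    rw [hind]
    linarith [hsplit, hIco]
  -- pointwise formula
  have pointFormula : ∀ x ∈ Ioo (-1:ℝ) 1,
      adhesion1D r Fr u x = (2*r^2)⁻¹ * (H (1+x) - H (1-x)) := by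
    intro x hx
    have hu_meas : Measurable u := by
      rw [hu]; exact measurable_const.indicator measurableSet_Ioo
    have hu_bd : ∀ y, ‖u y‖ ≤ 1 := by
      intro y; rw [hu]
      by_cases h : y ∈ Ioo (-1:ℝ) 1 <;> simp [Set.indicator_apply, h]
    set g : ℝ → ℝ := fun ξ => u (x + ξ) * Real.sign ξ * Fr |ξ| with hg
    have hPos : IntegrableOn (fun ξ => u (x + ξ) * Fr ξ) (Ioo 0 r) :=
      hF.bdd_mul ((hu_meas.comp (measurable_const.add measurable_id)).aestronglyMeasurable)
        (ae_of_all _ fun ξ => hu_bd _)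
    have hNeg : IntegrableOn (fun ξ => u (x - ξ) * Fr ξ) (Ioo 0 r) :=
      hF.bdd_mul ((hu_meas.comp (measurable_const.sub measurable_id)).aestronglyMeasurable)
        (ae_of_all _ fun ξ => hu_bd _)
    have haeg : ∀ ξ ∈ Ioo (0:ℝ) r, g ξ = u (x + ξ) * Fr ξ := by
      intro ξ hξ
      simp [hg, Real.sign_of_pos hξ.1, abs_of_pos hξ.1]
    have haegneg : ∀ ξ ∈ Ioo (0:ℝ) r, g (-ξ) = -(u (x - ξ) * Fr ξ) := by
      intro ξ hξ
      simp only [hg]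
      rw [Real.sign_of_neg (by linarith [hξ.1] : -ξ < 0), abs_neg, abs_of_pos hξ.1]
      ring_nf
    have hInt1 : IntervalIntegrable g volume 0 r :=
      intervalIntegrable_of_eqOn_Ioo hr0.le hPos haeg
    have hIntNeg : IntervalIntegrable (fun ξ => g (-ξ)) volume 0 r :=
      intervalIntegrable_of_eqOn_Ioo hr0.le hNeg.neg haegneg
    have hInt2 : IntervalIntegrable g volume (-r) 0 := by
      have h := (IntervalIntegrable.iff_comp_neg (f := g) (a := -r) (b := 0)).mpr (show IntervalIntegrable
        (fun ξ => g (-ξ)) volume (-(-r)) (-(0:ℝ)) by simpa using hIntNeg.symm)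
      exact h
    have hindPos : ∀ ξ ∈ Ioo (0:ℝ) r, u (x + ξ) * Fr ξ = (Iio (1 - x)).indicator Fr ξ := by
      intro ξ hξ
      rw [hu]
      simp only [Set.indicator_apply, Set.mem_Ioo, Set.mem_Iio]
      by_cases hlt : ξ < 1 - x
      · rw [if_pos ⟨by linarith [hx.1, hξ.1], by linarith⟩, if_pos hlt, one_mul]
      · rw [if_neg (fun hmem => hlt (by linarith [hmem.2])), if_neg hlt, zero_mul]
    have hindNeg : ∀ ξ ∈ Ioo (0:ℝ) r, u (x - ξ) * Fr ξ = (Iio (1 + x)).indicator Fr ξ := by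
      intro ξ hξ
      rw [hu]
      simp only [Set.indicator_apply, Set.mem_Ioo, Set.mem_Iio]
      by_cases hlt : ξ < 1 + x
      · rw [if_pos ⟨by linarith, by linarith [hx.2, hξ.1]⟩, if_pos hlt, one_mul]
      · rw [if_neg (fun hmem => hlt (by linarith [hmem.1])), if_neg hlt, zero_mul]
    have e1 : (∫ ξ in (0:ℝ)..r, g ξ) = (∫ ξ in Ioo (0:ℝ) r, Fr ξ) - H (1 - x) := by
      rw [intervalIntegral_congr_Ioo hr0.le (fun ξ hξ =>
        (haeg ξ hξ).trans (hindPos ξ hξ))]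
      rw [intervalIntegral.integral_of_le hr0.le, integral_Ioc_eq_integral_Ioo]
      exact utail (1 - x) (by linarith [hx.2])
    have e2 : (∫ ξ in (0:ℝ)..r, g (-ξ)) = -((∫ ξ in Ioo (0:ℝ) r, Fr ξ) - H (1 + x)) := by
      rw [intervalIntegral_congr_Ioo hr0.le (fun ξ hξ => (haegneg ξ hξ).trans
        (by rw [hindNeg ξ hξ]))]
      rw [intervalIntegral.integral_of_le hr0.le, integral_Ioc_eq_integral_Ioo,
        integral_neg, utail (1 + x) (by linarith [hx.1])]
    have e3 : (∫ ξ in (-r)..(0:ℝ), g ξ) = ∫ ξ in (0:ℝ)..r, g (-ξ) := by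
      rw [intervalIntegral.integral_comp_neg (a := (0:ℝ)) (b := r) g]
      norm_num
    have hsplit : (∫ ξ in (-r)..(0:ℝ), g ξ) + ∫ ξ in (0:ℝ)..r, g ξ = ∫ ξ in (-r)..r, g ξ :=
      intervalIntegral.integral_add_adjacent_intervals hInt2 hInt1
    have hinner : (∫ ξ in (-r)..r, g ξ) = H (1 + x) - H (1 - x) := by
      rw [← hsplit, e3, e2, e1]; ring
    show (2 * r ^ 2)⁻¹ * (∫ ξ in (-r)..r, g ξ) = _
    rw [hinner]
  -- absolute value formulas
  set c : ℝ := (2 * r ^ 2)⁻¹ with hc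
  have hcpos : 0 < c := by rw [hc]; positivity
  have absPos : ∀ x ∈ Ioo (0:ℝ) 1, |adhesion1D r Fr u x| = c * H (1 - x) := by
    intro x hx
    rw [pointFormula x ⟨by linarith [hx.1], hx.2⟩, hHzero (1 + x) (by linarith [hx.1])]
    rw [zero_sub, mul_neg, abs_neg, abs_of_nonneg
      (mul_nonneg hcpos.le (hHnn (1 - x) (by linarith [hx.2])))]
  have absNeg : ∀ x ∈ Ioo (-1:ℝ) 0, |adhesion1D r Fr u x| = c * H (x + 1) := by
    intro x hx
    rw [pointFormula x ⟨hx.1, by linarith [hx.2]⟩, hHzero (1 - x) (by linarith [hx.2])]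
    rw [sub_zero, abs_of_nonneg
      (mul_nonneg hcpos.le (hHnn (1 + x) (by linarith [hx.1]))), add_comm]
  -- integrability of H-compositions
  have hMono1 : MonotoneOn (fun x : ℝ => c * H (1 - x)) (uIcc (0:ℝ) 1) := by
    rw [uIcc_of_le (by norm_num : (0:ℝ) ≤ 1)]
    intro a ha b hb hab
    exact mul_le_mul_of_nonneg_left
      (hHanti (show (1:ℝ) - b ∈ Ici 0 by simp [hb.2]) (show (1:ℝ) - a ∈ Ici 0 by simp [ha.2])
        (by linarith)) hcpos.le
  have hAnti2 : AntitoneOn (fun x : ℝ => c * H (x + 1)) (uIcc (-1:ℝ) 0) := by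
    rw [uIcc_of_le (by norm_num : (-1:ℝ) ≤ 0)]
    intro a ha b hb hab
    exact mul_le_mul_of_nonneg_left
      (hHanti (show a + 1 ∈ Ici 0 by simp; linarith [ha.1]) (show b + 1 ∈ Ici 0 by simp; linarith [hb.1])
        (by linarith)) hcpos.le
  have hI1 : IntervalIntegrable (fun x : ℝ => c * H (1 - x)) volume 0 1 :=
    hMono1.intervalIntegrable
  have hI2 : IntervalIntegrable (fun x : ℝ => c * H (x + 1)) volume (-1) 0 :=
    hAnti2.intervalIntegrable
  have hIabs1 : IntervalIntegrable (fun x => |adhesion1D r Fr u x|) volume 0 1 := by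
    refine intervalIntegrable_of_eqOn_Ioo (by norm_num) ?_ absPos
    rw [← integrableOn_Ioc_iff_integrableOn_Ioo,
      ← intervalIntegrable_iff_integrableOn_Ioc_of_le (by norm_num : (0:ℝ) ≤ 1)]
    exact hI1
  have hIabs2 : IntervalIntegrable (fun x => |adhesion1D r Fr u x|) volume (-1) 0 := by
    refine intervalIntegrable_of_eqOn_Ioo (by norm_num) ?_ absNeg
    rw [← integrableOn_Ioc_iff_integrableOn_Ioo,
      ← intervalIntegrable_iff_integrableOn_Ioc_of_le (by norm_num : (-1:ℝ) ≤ 0)]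
    exact hI2
  -- compute the integral
  have hsplitA : (∫ x in (-1:ℝ)..0, |adhesion1D r Fr u x|)
      + (∫ x in (0:ℝ)..1, |adhesion1D r Fr u x|) = ∫ x in (-1:ℝ)..1, |adhesion1D r Fr u x| :=
    intervalIntegral.integral_add_adjacent_intervals hIabs2 hIabs1
  have hHint0r : IntervalIntegrable H volume 0 r :=
    (hHanti.mono (by rw [uIcc_of_le hr0.le]; exact fun s hs => hs.1)).intervalIntegrable
  have hHintr1 : IntervalIntegrable H volume r 1 :=
    (hHanti.mono (by rw [uIcc_of_le hr1.le]; exact fun s hs => hr0.le.trans hs.1)).intervalIntegrable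
  have hH01 : (∫ s in (0:ℝ)..1, H s) = ∫ s in (0:ℝ)..r, H s := by
    rw [← intervalIntegral.integral_add_adjacent_intervals hHint0r hHintr1]
    have : (∫ s in r..(1:ℝ), H s) = 0 := by
      rw [intervalIntegral.integral_congr (g := fun _ => (0:ℝ))
        (fun s hs => hHzero s (by rw [uIcc_of_le hr1.le] at hs; exact hs.1))]
      simp
    rw [this, add_zero]
  have hP1 : (∫ x in (0:ℝ)..1, |adhesion1D r Fr u x|) = c * ∫ s in (0:ℝ)..r, H s := by
    rw [intervalIntegral_congr_Ioo (by norm_num : (0:ℝ) ≤ 1) absPos]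
    rw [show (∫ x in (0:ℝ)..1, c * H (1 - x)) = c * ∫ x in (0:ℝ)..1, H (1 - x) from
      intervalIntegral.integral_const_mul c _]
    rw [intervalIntegral.integral_comp_sub_left H 1]
    norm_num [hH01]
  have hP2 : (∫ x in (-1:ℝ)..0, |adhesion1D r Fr u x|) = c * ∫ s in (0:ℝ)..r, H s := by
    rw [intervalIntegral_congr_Ioo (by norm_num : (-1:ℝ) ≤ 0) absNeg]
    rw [show (∫ x in (-1:ℝ)..0, c * H (x + 1)) = c * ∫ x in (-1:ℝ)..0, H (x + 1) from
      intervalIntegral.integral_const_mul c _]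
    rw [intervalIntegral.integral_comp_add_right H 1]
    norm_num [hH01]
  -- Fubini step
  have hFub : (∫ s in (0:ℝ)..r, H s) = ∫ ρ in (0:ℝ)..r, ρ * Fr ρ := by
    rw [intervalIntegral.integral_of_le hr0.le, intervalIntegral.integral_of_le hr0.le,
      integral_Ioc_eq_integral_Ioo, integral_Ioc_eq_integral_Ioo]
    exact fubini_triangle hF
  rw [← hsplitA, hP1, hP2, hFub, hc]
  field_simp
  ring
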